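/- Let R be a ring with an anti-automorphism τ (τ(xy) = τ(y)τ(x), τ(1) = 1), and let f, g, L ∈ R with g·f = 1. Set p := f·g and q := τ(p). Suppose u := g·L·τ(g) is invertible in R with inverse α. Then the element q·τ(g)·α·g·p is a two-sided inverse of p·L·q in the corner sense: (p·L·q)·(q·τ(g)·α·g·p) = p and (q·τ(g)·α·g·p)·(p·L·q) = q. -/
import Mathlib


theorem motivic_lefschetz_inverse {R : Type*} [Ring R]
    (τ : R → R)
    (hmul : ∀ x y, τ (x * y) = τ y * τ x)
    (hone : τ 1 = 1)
    (f g L α : R) (hgf : g * f = 1)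
    (hα₁ : (g * L * τ g) * α = 1) (hα₂ : α * (g * L * τ g) = 1) :
    let p := f * g
    let q := τ p
    (p * L * q) * (q * τ g * α * g * p) = p ∧
      (q * τ g * α * g * p) * (p * L * q) = q := by
  intro p q
  have h1 : τ f * τ g = 1 := by rw [← hmul, hgf, hone]
  have e1 : ∀ x : R, τ f * (τ g * x) = x := fun x => by rw [← mul_assoc, h1, one_mul]
  have e2 : ∀ x : R, g * (f * x) = x := fun x => by rw [← mul_assoc, hgf, one_mul]
  have e3 : ∀ x : R, g * (L * (τ g * (α * x))) = x := fun x => by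
    have : g * (L * (τ g * (α * x))) = ((g * L * τ g) * α) * x := by
      simp [mul_assoc]
    rw [this, hα₁, one_mul]
  have e4 : ∀ x : R, α * (g * (L * (τ g * x))) = x := fun x => by
    have : α * (g * (L * (τ g * x))) = (α * (g * L * τ g)) * x := by
      simp [mul_assoc]
    rw [this, hα₂, one_mul]
  constructor <;>
    simp only [p, q, hmul, mul_assoc, e1, e2, e3, e4, hgf, h1, mul_one, one_mul]
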